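/- Let θ = 1/r with r a positive integer, and let p_n be a monic polynomial of degree n. Then p_n satisfies ∫_0^∞ p_n(x) x^{kθ} w(x) dx = 0 for all k = 0,1,...,n-1 if and only if for every i = 1,...,r and every k = 0,...,⌊(n-i)/r⌋ one has ∫_0^∞ p_n(x) x^k w_i(x) dx = 0, where w_i(x) = x^{(i-1)θ} w(x). -/
import Mathlib


open MeasureTheory

lemma aux_int_eq (r : ℕ) (hr : 0 < r) (w : ℝ → ℝ) (p : Polynomial ℝ) (i k : ℕ)
    (hi : 1 ≤ i) :
    (∫ x in Set.Ioi (0 : ℝ),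
        p.eval x * x ^ (((k * r + (i - 1) : ℕ) : ℝ) * (1 / (r : ℝ))) * w x)
      = ∫ x in Set.Ioi (0 : ℝ),
          p.eval x * x ^ k * (x ^ (((i : ℝ) - 1) * (1 / (r : ℝ))) * w x) := by
  apply setIntegral_congr_fun measurableSet_Ioi
  intro x hx
  have hx0 : (0 : ℝ) < x := hx
  have hrr : (r : ℝ) ≠ 0 := Nat.cast_ne_zero.mpr hr.ne'
  have hexp : ((k * r + (i - 1) : ℕ) : ℝ) * (1 / (r : ℝ))
      = (k : ℝ) + ((i : ℝ) - 1) * (1 / (r : ℝ)) := by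
    have : ((i - 1 : ℕ) : ℝ) = (i : ℝ) - 1 := by
      push_cast [Nat.cast_sub hi]; ring
    push_cast [this]
    field_simp
  simp only
  rw [hexp, Real.rpow_add hx0, Real.rpow_natCast]
  ring

lemma aux_floor (r n i k : ℕ) (hr : 0 < r) (hi : 1 ≤ i) :
    (k : ℤ) ≤ ⌊((n : ℝ) - (i : ℝ)) / (r : ℝ)⌋ ↔ k * r + i ≤ n := by
  have hrR : (0 : ℝ) < (r : ℝ) := Nat.cast_pos.mpr hr
  rw [Int.le_floor]
  push_cast
  rw [le_div_iff₀ hrR]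
  constructor
  · intro h
    have : ((k * r + i : ℕ) : ℝ) ≤ (n : ℝ) := by push_cast; linarith
    exact_mod_cast this
  · intro h
    have : ((k * r + i : ℕ) : ℝ) ≤ (n : ℝ) := by exact_mod_cast h
    push_cast at this; linarith

/-- Biorthogonality conditions with respect to powers `x^(kθ)`, `θ = 1/r`, are
equivalent to multiple orthogonality conditions with respect to the weights
`w_i(x) = x^((i-1)θ) w(x)`, `i = 1, …, r`. -/
theorem stmt_0 (r n : ℕ) (hr : 0 < r) (w : ℝ → ℝ) (p : Polynomial ℝ)
    (hp : p.Monic) (hdeg : p.natDegree = n) :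
    (∀ k : ℕ, k < n →
        ∫ x in Set.Ioi (0 : ℝ), p.eval x * x ^ ((k : ℝ) * (1 / (r : ℝ))) * w x = 0) ↔
      (∀ i : ℕ, 1 ≤ i → i ≤ r → ∀ k : ℕ, (k : ℤ) ≤ ⌊((n : ℝ) - (i : ℝ)) / (r : ℝ)⌋ →
        ∫ x in Set.Ioi (0 : ℝ),
          p.eval x * x ^ k * (x ^ (((i : ℝ) - 1) * (1 / (r : ℝ))) * w x) = 0) := by
  constructor
  · intro h i hi hir k hk
    rw [aux_floor r n i k hr hi] at hk
    have hlt : k * r + (i - 1) < n := by omega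
    rw [← aux_int_eq r hr w p i k hi]
    exact h _ hlt
  · intro h m hm
    have hi : 1 ≤ m % r + 1 := Nat.le_add_left 1 _
    have hir : m % r + 1 ≤ r := Nat.mod_lt m hr
    have hk : ((m / r : ℕ) : ℤ) ≤ ⌊((n : ℝ) - ((m % r + 1 : ℕ) : ℝ)) / (r : ℝ)⌋ := by
      rw [aux_floor r n _ _ hr hi]
      have hdm := Nat.div_add_mod m r
      calc m / r * r + (m % r + 1) = r * (m / r) + m % r + 1 := by ring
        _ = m + 1 := by rw [hdm]
        _ ≤ n := hm
    have key := h (m % r + 1) hi hir (m / r) hk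
    rw [← aux_int_eq r hr w p _ _ hi] at key
    have hm_eq : m / r * r + (m % r + 1 - 1) = m := by
      have hdm := Nat.div_add_mod m r
      simpa [Nat.mul_comm] using hdm
    rw [hm_eq] at key
    exact key
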